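/- Let M be the set of fixed-point-free involutions in the symmetric group on the set {1, 2, 3, 4, 5, 6} (M has exactly 15 elements), and let the subgroup H of S₆ generated by the permutations (1 2 3)(4 5 6) and (1 4)(2 6)(3 5) act on M by conjugation. Then this action has exactly 7 orbits: exactly 3 orbits of size 1 and exactly 4 orbits of size 3. -/
import Mathlib
set_option maxRecDepth 2000


/-- The set of fixed-point-free involutions of `{1,…,6}` (realized on `Fin 6`). -/
def FPFInv : Set (Equiv.Perm (Fin 6)) := {σ | σ * σ = 1 ∧ ∀ i, σ i ≠ i}

/-- The subgroup of `S₆` generated by `(1 2 3)(4 5 6)` and `(1 4)(2 6)(3 5)`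
(zero-indexed on `Fin 6`). -/
def H13 : Subgroup (Equiv.Perm (Fin 6)) :=
  Subgroup.closure
    {Equiv.swap 0 1 * Equiv.swap 1 2 * (Equiv.swap 3 4 * Equiv.swap 4 5),
     Equiv.swap 0 3 * Equiv.swap 1 5 * Equiv.swap 2 4}

/-- The orbits of the conjugation action of `H13` on `FPFInv`. -/
def Orbits13 : Set (Set (Equiv.Perm (Fin 6))) :=
  (fun σ => {τ | ∃ g ∈ H13, g * σ * g⁻¹ = τ}) '' FPFInv

namespace Aux13
open Equiv Pointwise

def a : Perm (Fin 6) := Equiv.swap 0 1 * Equiv.swap 1 2 * (Equiv.swap 3 4 * Equiv.swap 4 5)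
def b : Perm (Fin 6) := Equiv.swap 0 3 * Equiv.swap 1 5 * Equiv.swap 2 4

def HF : Finset (Perm (Fin 6)) := {1, a, a * a, b, a * b, a * a * b}

def K : Subgroup (Perm (Fin 6)) where
  carrier := ↑HF
  one_mem' := by
    have : (1 : Perm (Fin 6)) ∈ HF := by decide
    exact Finset.mem_coe.mpr this
  mul_mem' := by
    intro x y hx hy
    have h : HF * HF ⊆ HF := by decide
    exact Finset.mem_coe.mpr (h (Finset.mul_mem_mul (Finset.mem_coe.mp hx) (Finset.mem_coe.mp hy)))
  inv_mem' := by
    intro x hx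
    have h : HF⁻¹ ⊆ HF := by decide
    exact Finset.mem_coe.mpr (h (Finset.inv_mem_inv (Finset.mem_coe.mp hx)))

lemma mem_H13 (g : Perm (Fin 6)) : g ∈ H13 ↔ g ∈ HF := by
  constructor
  · intro hg
    have hle : H13 ≤ K := by
      rw [H13, Subgroup.closure_le]
      intro x hx
      rcases hx with hx | hx
      · subst hx; exact Finset.mem_coe.mpr (by decide : a ∈ HF)
      · rw [Set.mem_singleton_iff] at hx
        subst hx; exact Finset.mem_coe.mpr (by decide : b ∈ HF)
    exact Finset.mem_coe.mp (hle hg)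
  · intro hg
    have ha : a ∈ H13 := Subgroup.subset_closure (Set.mem_insert _ _)
    have hb : b ∈ H13 := Subgroup.subset_closure (Set.mem_insert_of_mem _ rfl)
    simp only [HF, Finset.mem_insert, Finset.mem_singleton] at hg
    rcases hg with rfl | rfl | rfl | rfl | rfl | rfl
    · exact one_mem _
    · exact ha
    · exact mul_mem ha ha
    · exact hb
    · exact mul_mem ha hb
    · exact mul_mem (mul_mem ha ha) hb

def o (σ : Perm (Fin 6)) : Finset (Perm (Fin 6)) := HF.image (fun g => g * σ * g⁻¹)

def F : Finset (Perm (Fin 6)) := Finset.univ.filter (fun σ => σ * σ = 1 ∧ ∀ i, σ i ≠ i)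

def OF : Finset (Finset (Perm (Fin 6))) := F.image o

lemma FPFInv_eq : FPFInv = ↑F := by
  ext σ
  simp [FPFInv, F]

lemma orbit_eq (σ : Perm (Fin 6)) :
    {τ | ∃ g ∈ H13, g * σ * g⁻¹ = τ} = ↑(o σ) := by
  ext τ
  simp only [Set.mem_setOf_eq, Finset.coe_image, Set.mem_image, Finset.mem_coe, o, mem_H13]

lemma orbits_eq : Orbits13 = (fun t : Finset (Perm (Fin 6)) => (↑t : Set (Perm (Fin 6)))) '' (OF : Set (Finset (Perm (Fin 6)))) := by
  rw [Orbits13, FPFInv_eq]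
  have : (fun σ => {τ | ∃ g ∈ H13, g * σ * g⁻¹ = τ}) = fun σ => ((o σ : Set (Perm (Fin 6)))) := by
    funext σ; exact orbit_eq σ
  rw [this, OF, Finset.coe_image, ← Set.image_comp]
  rfl

lemma key : F.card = 15 ∧ OF.card = 7 ∧ (OF.filter (fun t => t.card = 1)).card = 3 ∧
    (OF.filter (fun t => t.card = 3)).card = 4 := by decide

lemma sep_eq (n : ℕ) :
    {S ∈ Orbits13 | S.ncard = n} = (fun t : Finset (Perm (Fin 6)) => (↑t : Set (Perm (Fin 6)))) '' ((OF.filter (fun t => t.card = n)) : Set (Finset (Perm (Fin 6)))) := by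
  ext S
  simp only [Set.mem_sep_iff, orbits_eq, Set.mem_image, Finset.mem_coe, Finset.mem_filter]
  constructor
  · rintro ⟨⟨t, ht, rfl⟩, hc⟩
    exact ⟨t, ⟨ht, by rwa [Set.ncard_coe_finset] at hc⟩, rfl⟩
  · rintro ⟨t, ⟨ht, hc⟩, rfl⟩
    exact ⟨⟨t, ht, rfl⟩, by rwa [Set.ncard_coe_finset]⟩

end Aux13

theorem stmt13 :
    FPFInv.ncard = 15 ∧
    Orbits13.ncard = 7 ∧
    {S ∈ Orbits13 | S.ncard = 1}.ncard = 3 ∧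
    {S ∈ Orbits13 | S.ncard = 3}.ncard = 4 := by
  obtain ⟨h1, h2, h3, h4⟩ := Aux13.key
  refine ⟨?_, ?_, ?_, ?_⟩
  · rw [Aux13.FPFInv_eq, Set.ncard_coe_finset]; exact h1
  · rw [Aux13.orbits_eq, Set.ncard_image_of_injective _ Finset.coe_injective,
      Set.ncard_coe_finset]; exact h2
  · rw [Aux13.sep_eq, Set.ncard_image_of_injective _ Finset.coe_injective,
      Set.ncard_coe_finset]; exact h3
  · rw [Aux13.sep_eq, Set.ncard_image_of_injective _ Finset.coe_injective,
      Set.ncard_coe_finset]; exact h4
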